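/- For the Huber-type contaminated model F̃_{γ,α} = (1-ε)F_0 + ε F_{γ,α}, where F_{γ,α} agrees with F_0 up to τ_α = F_0^{-1}(α) and has Pareto tail with index γ > 1 above τ_α, the expected shortfall equals CVaR_{γ,α} = (1-ε)·CVaR_{F_0,α} + ε·(γ/(γ-1))·τ_α, where CVaR_{F_0,α} = (1-α)^{-1}∫_α^1 F_0^{-1}(t) dt. -/

import Mathlib

open MeasureTheory Set Filter

lemma key12 (α : ℝ) (hα0 : 0 < α) (hα1 : α < 1) (F0 Finv : ℝ → ℝ)
    (hcont : Continuous F0) (hsm : StrictMono F0)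
    (htop : Tendsto F0 atTop (nhds 1))
    (hInv : ∀ t ∈ Set.Ioo (0:ℝ) 1, F0 (Finv t) = t)
    (hIntQ : IntervalIntegrable Finv volume α 1)
    (hIntT : IntegrableOn (fun x => 1 - F0 x) (Set.Ioi (Finv α))) :
    ∫ x in Set.Ioi (Finv α), (1 - F0 x) = (∫ t in α..1, Finv t) - (1-α) * Finv α := by
  set τ := Finv α with hτdef
  have hτα : F0 τ = α := hInv α ⟨hα0, hα1⟩
  have hle1 : ∀ x, F0 x ≤ 1 := hsm.monotone.ge_of_tendsto htop
  have hlt1 : ∀ x, F0 x < 1 := fun x => lt_of_lt_of_le (hsm (lt_add_one x)) (hle1 _)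
  have hFgtα : ∀ x, τ < x → α < F0 x := fun x hx => hτα ▸ hsm hx
  have hFinv_gt : ∀ t ∈ Ioo α 1, τ < Finv t := by
    intro t ht
    have := hInv t ⟨hα0.trans ht.1, ht.2⟩
    have : F0 τ < F0 (Finv t) := by rw [hτα, this]; exact ht.1
    exact hsm.lt_iff_lt.mp this
  set S : Set (ℝ × ℝ) := {p : ℝ × ℝ | p.1 ∈ Ioi τ ∧ p.2 ∈ Ioo (F0 p.1) 1} with hSdef
  have hS : MeasurableSet S := by
    apply MeasurableSet.inter
    · exact measurable_fst measurableSet_Ioi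
    · exact MeasurableSet.inter
        (measurableSet_lt (hcont.measurable.comp measurable_fst) measurable_snd)
        (measurable_snd measurableSet_Iio)
  have hQint : IntegrableOn Finv (Ioo α 1) := (hIntQ.1).mono_set Ioo_subset_Ioc_self
  have hQint' : IntegrableOn (fun t => Finv t - τ) (Ioo α 1) :=
    hQint.sub (integrableOn_const (by simp))
  -- first slicing
  have h1 : (volume.prod volume) S = ∫⁻ x in Ioi τ, ENNReal.ofReal (1 - F0 x) := by
    rw [Measure.prod_apply hS]
    have : ∀ x, volume (Prod.mk x ⁻¹' S)
        = (Ioi τ).indicator (fun x => ENNReal.ofReal (1 - F0 x)) x := by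
      intro x
      by_cases hx : x ∈ Ioi τ
      · have : Prod.mk x ⁻¹' S = Ioo (F0 x) 1 := by
          ext t
          exact ⟨fun h => h.2, fun h => ⟨hx, h⟩⟩
        rw [this, Real.volume_Ioo, indicator_of_mem hx]
      · have : Prod.mk x ⁻¹' S = ∅ := by
          ext t
          exact ⟨fun h => (hx h.1).elim, fun h => h.elim⟩
        rw [this, indicator_of_notMem hx]; simp
    simp_rw [this]
    rw [lintegral_indicator measurableSet_Ioi]
  -- second slicing
  have h2 : (volume.prod volume) S = ∫⁻ t in Ioo α 1, ENNReal.ofReal (Finv t - τ) := by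
    rw [Measure.prod_apply_symm hS]
    have : ∀ t, volume ((fun x => (x, t)) ⁻¹' S)
        = (Ioo α 1).indicator (fun t => ENNReal.ofReal (Finv t - τ)) t := by
      intro t
      by_cases ht : t ∈ Ioo α 1
      · have hpre : (fun x => (x, t)) ⁻¹' S = Ioo τ (Finv t) := by
          ext x
          have hiff : F0 x < t ↔ x < Finv t := by
            constructor
            · intro h
              have h' : F0 x < F0 (Finv t) := by
                rw [hInv t ⟨hα0.trans ht.1, ht.2⟩]; exact h
              exact hsm.lt_iff_lt.mp h'
            · intro h
              have h' : F0 x < F0 (Finv t) := hsm h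
              rwa [hInv t ⟨hα0.trans ht.1, ht.2⟩] at h'
          constructor
          · rintro ⟨h1, hm⟩; exact ⟨h1, hiff.mp hm.1⟩
          · rintro ⟨h1, h2⟩; exact ⟨h1, hiff.mpr h2, ht.2⟩
        rw [hpre, Real.volume_Ioo, indicator_of_mem ht]
      · have hpre : (fun x => (x, t)) ⁻¹' S = ∅ := by
          ext x
          constructor
          · rintro ⟨hx, hm⟩
            exact absurd (⟨(hFgtα x hx).trans hm.1, hm.2⟩ : t ∈ Ioo α 1) ht
          · exact fun h => h.elim
        rw [hpre, indicator_of_notMem ht]; simp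
    simp_rw [this]
    rw [lintegral_indicator measurableSet_Ioo]
  -- convert to Bochner
  have hnn1 : 0 ≤ᵐ[volume.restrict (Ioi τ)] (fun x => 1 - F0 x) :=
    Filter.Eventually.of_forall (fun x => by simp only [Pi.zero_apply]; linarith [hlt1 x])
  have hnn2 : 0 ≤ᵐ[volume.restrict (Ioo α 1)] (fun t => Finv t - τ) := by
    filter_upwards [ae_restrict_mem measurableSet_Ioo] with t ht
    simp only [Pi.zero_apply]
    linarith [hFinv_gt t ht]
  have e1 := ofReal_integral_eq_lintegral_ofReal hIntT hnn1
  have e2 := ofReal_integral_eq_lintegral_ofReal hQint' hnn2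
  have heq : ENNReal.ofReal (∫ x in Ioi τ, (1 - F0 x))
      = ENNReal.ofReal (∫ t in Ioo α 1, (Finv t - τ)) := by
    rw [e1, e2, ← h1, ← h2]
  have hpos1 : 0 ≤ ∫ x in Ioi τ, (1 - F0 x) := setIntegral_nonneg measurableSet_Ioi
    (fun x _ => by linarith [hlt1 x])
  have hreal : ∫ x in Ioi τ, (1 - F0 x) = ∫ t in Ioo α 1, (Finv t - τ) := by
    have hpos2 : 0 ≤ ∫ t in Ioo α 1, (Finv t - τ) := setIntegral_nonneg measurableSet_Ioo
      (fun t ht => by linarith [hFinv_gt t ht])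
    exact (ENNReal.ofReal_eq_ofReal_iff hpos1 hpos2).mp heq
  rw [hreal, integral_sub hQint (integrableOn_const (by simp))]
  rw [intervalIntegral.integral_of_le hα1.le, integral_Ioc_eq_integral_Ioo]
  rw [setIntegral_const, measureReal_def, Real.volume_Ioo]
  rw [ENNReal.toReal_ofReal (by linarith)]
  simp only [smul_eq_mul]

/-- Expected shortfall of the Huber-type contaminated model with Pareto tail. -/
theorem stmt_12 (α γ ε : ℝ) (hα : α ∈ Set.Ioo (0:ℝ) 1) (hγ : 1 < γ)
    (hε : 0 ≤ ε) (hε1 : ε < 1)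
    (F0 Finv : ℝ → ℝ) (hcont : Continuous F0) (hsm : StrictMono F0)
    (hbot : Tendsto F0 atBot (nhds 0)) (htop : Tendsto F0 atTop (nhds 1))
    (hInv : ∀ t ∈ Set.Ioo (0:ℝ) 1, F0 (Finv t) = t)
    (hτpos : 0 < Finv α)
    (hIntQ : IntervalIntegrable Finv volume α 1)
    (hIntT : IntegrableOn (fun x => 1 - F0 x) (Set.Ioi (Finv α))) :
    Finv α + ∫ x in Set.Ioi (Finv α),
        min ((1 - ((1 - ε) * F0 x
          + ε * (if x ≤ Finv α then F0 x else 1 - (1 - α) * (Finv α / x) ^ γ))) / (1 - α)) 1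
      = (1 - ε) * ((1 - α)⁻¹ * ∫ t in α..1, Finv t) + ε * (γ / (γ - 1)) * Finv α := by
  obtain ⟨hα0, hα1⟩ := hα
  set τ := Finv α with hτdef
  have hτα : F0 τ = α := hInv α ⟨hα0, hα1⟩
  have hle1 : ∀ x, F0 x ≤ 1 := hsm.monotone.ge_of_tendsto htop
  have hlt1 : ∀ x, F0 x < 1 := fun x => lt_of_lt_of_le (hsm (lt_add_one x)) (hle1 _)
  have h1α : (0:ℝ) < 1 - α := by linarith
  have hγ1 : (0:ℝ) < γ - 1 := by linarith
  -- pointwise form of the integrand on Ioi τ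
  have hpt : ∀ x ∈ Ioi τ,
      min ((1 - ((1 - ε) * F0 x
          + ε * (if x ≤ τ then F0 x else 1 - (1 - α) * (τ / x) ^ γ))) / (1 - α)) 1
      = (1 - ε) * ((1 - F0 x) / (1 - α)) + ε * (τ / x) ^ γ := by
    intro x hx
    have hx' : τ < x := hx
    have hx0 : (0:ℝ) < x := hτpos.trans hx'
    rw [if_neg (not_le.mpr hx')]
    have hFx : α < F0 x := hτα ▸ hsm hx'
    have hpow0 : (0:ℝ) ≤ (τ / x) ^ γ := Real.rpow_nonneg (by positivity) γ
    have hpow_le : (τ / x) ^ γ ≤ 1 :=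
      Real.rpow_le_one (by positivity) ((div_le_one hx0).mpr hx'.le) (by linarith)
    have hexpr : (1 - ((1 - ε) * F0 x + ε * (1 - (1 - α) * (τ / x) ^ γ))) / (1 - α)
        = (1 - ε) * ((1 - F0 x) / (1 - α)) + ε * (τ / x) ^ γ := by
      field_simp
      ring
    rw [hexpr]
    apply min_eq_left
    have hA : (1 - F0 x) / (1 - α) ≤ 1 := (div_le_one h1α).mpr (by linarith)
    have hA0 : 0 ≤ (1 - F0 x) / (1 - α) := div_nonneg (by linarith [hlt1 x]) h1α.le
    nlinarith
  -- integrability of the two pieces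
  have hI1 : IntegrableOn (fun x => (1 - ε) * ((1 - F0 x) / (1 - α))) (Ioi τ) := by
    have := (hIntT.div_const (1 - α)).const_mul (1 - ε)
    simpa [IntegrableOn] using this
  have hIpow : IntegrableOn (fun x => (τ / x) ^ γ) (Ioi τ) := by
    have hbase : IntegrableOn (fun x : ℝ => x ^ (-γ)) (Ioi τ) :=
      integrableOn_Ioi_rpow_of_lt (by linarith) hτpos
    have hcm := hbase.const_mul (τ ^ γ)
    apply IntegrableOn.congr_fun hcm _ measurableSet_Ioi
    intro x hx
    have hx0 : (0:ℝ) < x := hτpos.trans hx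
    show τ ^ γ * x ^ (-γ) = (τ / x) ^ γ
    rw [Real.div_rpow hτpos.le hx0.le, Real.rpow_neg hx0.le, div_eq_mul_inv]
  have hI2 : IntegrableOn (fun x => ε * (τ / x) ^ γ) (Ioi τ) := hIpow.const_mul ε
  -- rewrite the integral
  have hset : ∫ x in Ioi τ,
      min ((1 - ((1 - ε) * F0 x
          + ε * (if x ≤ τ then F0 x else 1 - (1 - α) * (τ / x) ^ γ))) / (1 - α)) 1
      = ∫ x in Ioi τ, ((1 - ε) * ((1 - F0 x) / (1 - α)) + ε * (τ / x) ^ γ) :=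
    setIntegral_congr_fun measurableSet_Ioi hpt
  rw [hset, integral_add hI1 hI2]
  -- compute each piece
  have hP1 : ∫ x in Ioi τ, (1 - ε) * ((1 - F0 x) / (1 - α))
      = (1 - ε) / (1 - α) * ∫ x in Ioi τ, (1 - F0 x) := by
    rw [integral_const_mul]
    simp_rw [div_eq_mul_inv, mul_comm (1 - (F0 _)) (1 - α)⁻¹, integral_const_mul]
    ring
  have hpareto : ∫ x in Ioi τ, (τ / x) ^ γ = τ / (γ - 1) := by
    have hcg : ∫ x in Ioi τ, (τ / x) ^ γ = ∫ x in Ioi τ, τ ^ γ * x ^ (-γ) := by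
      apply setIntegral_congr_fun measurableSet_Ioi
      intro x hx
      have hx0 : (0:ℝ) < x := hτpos.trans hx
      show (τ / x) ^ γ = τ ^ γ * x ^ (-γ)
      rw [Real.div_rpow hτpos.le hx0.le, Real.rpow_neg hx0.le, div_eq_mul_inv]
    rw [hcg, integral_const_mul, integral_Ioi_rpow_of_lt (by linarith) hτpos]
    rw [show (-γ + 1 : ℝ) = -(γ - 1) by ring, neg_div_neg_eq, ← mul_div_assoc]
    rw [show τ ^ γ * τ ^ (-(γ - 1)) = τ by
      rw [← Real.rpow_add hτpos, show γ + -(γ - 1) = (1:ℝ) by ring, Real.rpow_one]]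
  have hP2 : ∫ x in Ioi τ, ε * (τ / x) ^ γ = ε * (τ / (γ - 1)) := by
    rw [integral_const_mul, hpareto]
  have hkey := key12 α hα0 hα1 F0 Finv hcont hsm htop hInv hIntQ hIntT
  rw [hP1, hP2, hkey]
  field_simp
  ring
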